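/- Let ι be a finite set with an involution i ↦ i*. Let d : ι → ℝ with d_i > 0 and d_{i*} = d_i for all i, let θ : ι → ℂ with |θ_i| = 1 for all i, let N : ι × ι × ι → ℕ (written N_{ab}^c), and let s : ι × ι → ℂ. Assume for all a, b ∈ ι: (i) s_{ab} = θ_a^{-1} θ_b^{-1} Σ_c N_{a*b}^c θ_c d_c; (ii) Σ_c N_{a*b}^c d_c = d_a d_b; (iii) s_{ab} = s_{ba}; (iv) s_{a*b} = conjugate of s_{ab}; and (v) the Verlinde identity s_{ka} s_{kb} / d_k = Σ_c N_{ab}^c s_{kc} holds for all k, a, b ∈ ι. Then for all i, k ∈ ι: one has s_{kj} = d_k d_j for every j with N_{ii*}^j ≠ 0 if and only if |s_{ik}| = d_i d_k. (This is the key lemma relating an object centralizing all constituents of X_i ⊗ X_i* to the condition |s_{ik}| = d_i d_k in a pseudounitary modular category.) -/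

import Mathlib

/-- Numerical data abstracted from a pseudounitary modular
category: a finite index set `ι` with involution `i ↦ i*`, positive
star-invariant dimensions `d`, unit-modulus twists `θ`, fusion coefficients
`N_{ab}^c ∈ ℕ`, and an `S`-matrix `s` satisfying (i) the balancing formula
`s_{ab} = θ_a⁻¹ θ_b⁻¹ Σ_c N_{a*b}^c θ_c d_c`; (ii) `Σ_c N_{a*b}^c d_c = d_a d_b`;
(iii) `s_{ab} = s_{ba}`; (iv) `s_{a*b} = conj (s_{ab})`; (v) the Verlinde
identity `s_{ka} s_{kb} / d_k = Σ_c N_{ab}^c s_{kc}`.  Then for all `i, k`: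
`s_{kj} = d_k d_j` for every `j` with `N_{ii*}^j ≠ 0` if and only if
`|s_{ik}| = d_i d_k`. -/
theorem centralize_iff_abs_eq {ι : Type*} [Fintype ι]
    (star : ι → ι) (hstar : ∀ i, star (star i) = i)
    (d : ι → ℝ) (hd : ∀ i, 0 < d i) (hdstar : ∀ i, d (star i) = d i)
    (θ : ι → ℂ) (hθ : ∀ i, ‖θ i‖ = 1)
    (N : ι → ι → ι → ℕ) (s : ι → ι → ℂ)
    (h1 : ∀ a b, s a b =
      (θ a)⁻¹ * (θ b)⁻¹ * ∑ c : ι, (N (star a) b c : ℂ) * θ c * (d c : ℂ))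
    (h2 : ∀ a b, (∑ c : ι, (N (star a) b c : ℝ) * d c) = d a * d b)
    (h3 : ∀ a b, s a b = s b a)
    (h4 : ∀ a b, s (star a) b = (starRingEnd ℂ) (s a b))
    (h5 : ∀ k a b, s k a * s k b / (d k : ℂ) = ∑ c : ι, (N a b c : ℂ) * s k c) :
    ∀ i k, (∀ j, N i (star i) j ≠ 0 → s k j = (d k : ℂ) * (d j : ℂ)) ↔
      ‖s i k‖ = d i * d k := by
  intro i k
  -- general bound |s a b| ≤ d a * d b
  have habs : ∀ a b, ‖s a b‖ ≤ d a * d b := by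
    intro a b
    rw [h1 a b]
    calc ‖(θ a)⁻¹ * (θ b)⁻¹ *
            ∑ c : ι, (N (star a) b c : ℂ) * θ c * (d c : ℂ)‖
        = ‖∑ c : ι, (N (star a) b c : ℂ) * θ c * (d c : ℂ)‖ := by
          rw [norm_mul, norm_mul, norm_inv, norm_inv, hθ, hθ]; ring
      _ ≤ ∑ c : ι, ‖(N (star a) b c : ℂ) * θ c * (d c : ℂ)‖ :=
          norm_sum_le _ _
      _ = ∑ c : ι, (N (star a) b c : ℝ) * d c := by
          refine Finset.sum_congr rfl fun c _ => ?_
          rw [norm_mul, norm_mul, hθ, Complex.norm_natCast, Complex.norm_real, Real.norm_eq_abs,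
            abs_of_pos (hd c)]
          ring
      _ = d a * d b := h2 a b
  have hdk : (d k : ℂ) ≠ 0 := Complex.ofReal_ne_zero.mpr (hd k).ne'
  have hconj : s k (star i) = (starRingEnd ℂ) (s k i) := by
    rw [h3 k (star i), h4, h3]
  -- key Verlinde consequence (complex form)
  have hkC : (Complex.normSq (s k i) : ℂ) =
      (d k : ℂ) * ∑ j : ι, (N i (star i) j : ℂ) * s k j := by
    have h := h5 k i (star i)
    rw [hconj, Complex.mul_conj] at h
    field_simp at h
    rw [h]
  -- real form
  have hkR : Complex.normSq (s k i) =
      d k * ∑ j : ι, (N i (star i) j : ℝ) * (s k j).re := by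
    have h := congrArg Complex.re hkC
    simpa [Complex.mul_re, Complex.re_sum, Finset.mul_sum] using h
  have hNd : (∑ j : ι, (N i (star i) j : ℝ) * d j) = d i * d i := by
    have h := h2 (star i) (star i)
    rwa [hstar, hdstar] at h
  constructor
  · intro H
    have hsum : (∑ j : ι, (N i (star i) j : ℂ) * s k j) =
        ((d k * (d i * d i) : ℝ) : ℂ) := by
      have hR : ∑ j : ι, (N i (star i) j : ℝ) * (d k * d j) = d k * (d i * d i) := by
        rw [show ∑ j : ι, (N i (star i) j : ℝ) * (d k * d j)
            = d k * ∑ j : ι, (N i (star i) j : ℝ) * d j from by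
          rw [Finset.mul_sum]; exact Finset.sum_congr rfl fun j _ => by ring, hNd]
      calc (∑ j : ι, (N i (star i) j : ℂ) * s k j)
          = ∑ j : ι, (N i (star i) j : ℂ) * ((d k : ℂ) * (d j : ℂ)) := by
            refine Finset.sum_congr rfl fun j _ => ?_
            by_cases hj : N i (star i) j = 0
            · simp [hj]
            · rw [H j hj]
        _ = ((∑ j : ι, (N i (star i) j : ℝ) * (d k * d j) : ℝ) : ℂ) := by
            push_cast; rfl
        _ = _ := by rw [hR]
    have hns : Complex.normSq (s k i) = (d i * d k) ^ 2 := by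
      have h := hkC
      rw [hsum] at h
      have h' : ((Complex.normSq (s k i) : ℝ) : ℂ) =
          (((d i * d k) ^ 2 : ℝ) : ℂ) := by rw [h]; push_cast; ring
      exact_mod_cast h'
    have h0 : ‖s i k‖ ^ 2 = (d i * d k) ^ 2 := by
      rw [h3, Complex.sq_norm, hns]
    have hnn : 0 ≤ ‖s i k‖ := norm_nonneg _
    nlinarith [mul_pos (hd i) (hd k)]
  · intro H j0 hj0
    have hns : Complex.normSq (s k i) = (d i * d k) ^ 2 := by
      rw [← Complex.sq_norm, h3, H]
    have hre : ∑ j : ι, (N i (star i) j : ℝ) * (s k j).re = d i * d i * d k := by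
      apply mul_left_cancel₀ (hd k).ne'
      rw [← hkR, hns]; ring
    have hsum0 : ∑ j : ι, (N i (star i) j : ℝ) * (d k * d j - (s k j).re) = 0 := by
      have h1' : ∑ j : ι, (N i (star i) j : ℝ) * (d k * d j) =
          d k * ∑ j : ι, (N i (star i) j : ℝ) * d j := by
        rw [Finset.mul_sum]; exact Finset.sum_congr rfl fun j _ => by ring
      calc ∑ j : ι, (N i (star i) j : ℝ) * (d k * d j - (s k j).re)
          = (∑ j : ι, (N i (star i) j : ℝ) * (d k * d j)) -
            ∑ j : ι, (N i (star i) j : ℝ) * (s k j).re := by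
            rw [← Finset.sum_sub_distrib]
            exact Finset.sum_congr rfl fun j _ => by ring
        _ = 0 := by rw [h1', hNd, hre]; ring
    have hterm : ∀ j ∈ Finset.univ,
        0 ≤ (N i (star i) j : ℝ) * (d k * d j - (s k j).re) := by
      intro j _
      apply mul_nonneg (Nat.cast_nonneg _)
      have h1' : (s k j).re ≤ ‖s k j‖ := Complex.re_le_norm _
      have h2' := habs k j
      linarith [h2', h1']
    have hz := (Finset.sum_eq_zero_iff_of_nonneg hterm).mp hsum0 j0 (Finset.mem_univ _)
    have hNj0 : (0 : ℝ) < (N i (star i) j0 : ℝ) := by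
      exact_mod_cast Nat.pos_of_ne_zero hj0
    have hre0 : (s k j0).re = d k * d j0 := by
      have := mul_eq_zero.mp hz
      rcases this with h | h
      · exact absurd h hNj0.ne'
      · linarith
    have him0 : (s k j0).im = 0 := by
      have hb := habs k j0
      have hnn : 0 ≤ ‖s k j0‖ := norm_nonneg _
      have hsq : ‖s k j0‖ ^ 2 = (s k j0).re ^ 2 + (s k j0).im ^ 2 := by
        rw [Complex.sq_norm, Complex.normSq_apply]; ring
      have him2 : (s k j0).im ^ 2 ≤ 0 := by nlinarith [mul_pos (hd k) (hd j0)]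
      nlinarith [sq_nonneg (s k j0).im]
    apply Complex.ext
    · simpa using hre0
    · simpa using him0
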